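/- Let K ≥ 1 be a real number. Then ∫₀¹ 1/Δ(r) dr = (1/2) √((K+1)/K) · log( (√(K+1) + √K) / (√(K+1) − √K) ). Consequently, the schedule g₁(r) = [2√(K/(K+1)) / log((√(K+1)+√K)/(√(K+1)−√K))] · Δ(r)^{-1} satisfies ∫₀¹ g₁(r) dr = 1. -/

import Mathlib

/-- The spectral gap `Δ(r) = √(1 - 4 K r (1-r)/(K+1))` of the restricted Grover Hamiltonian. -/
noncomputable def groverGap (K r : ℝ) : ℝ :=
  Real.sqrt (1 - 4 * K * r * (1 - r) / (K + 1))

/-- The schedule `g₁(r) ∝ Δ(r)⁻¹`, normalized so that `∫₀¹ g₁ = 1`. -/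
noncomputable def groverSchedule1 (K : ℝ) : ℝ → ℝ :=
  fun r => (2 * Real.sqrt (K / (K + 1)) /
      Real.log ((Real.sqrt (K + 1) + Real.sqrt K) / (Real.sqrt (K + 1) - Real.sqrt K)))
    * (groverGap K r)⁻¹

/-- `∫₀¹ Δ(r)⁻¹ dr = (1/2)√((K+1)/K) log[(√(K+1)+√K)/(√(K+1)-√K)]`, and
consequently `∫₀¹ g₁(r) dr = 1`. -/
theorem grover_schedule1_normalized (K : ℝ) (hK : 1 ≤ K) :
    (∫ r in (0 : ℝ)..1, (groverGap K r)⁻¹)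
        = (1 / 2) * Real.sqrt ((K + 1) / K) *
          Real.log ((Real.sqrt (K + 1) + Real.sqrt K) / (Real.sqrt (K + 1) - Real.sqrt K))
    ∧ (∫ r in (0 : ℝ)..1, groverSchedule1 K r) = 1 := by
  set c := Real.sqrt K with hc
  set a := Real.sqrt (K + 1) with ha
  have hK0 : (0:ℝ) < K := by linarith
  have hK1 : (0:ℝ) < K + 1 := by linarith
  have hc2 : c ^ 2 = K := Real.sq_sqrt hK0.le
  have ha2 : a ^ 2 = K + 1 := Real.sq_sqrt hK1.le
  have hc0 : 0 < c := Real.sqrt_pos.mpr hK0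
  have ha0 : 0 < a := Real.sqrt_pos.mpr hK1
  have hc1 : 1 ≤ c := by
    rw [hc]; simpa using Real.sqrt_le_sqrt hK
  have hac : c < a := Real.sqrt_lt_sqrt hK0.le (by linarith)
  have hgap : ∀ r : ℝ, groverGap K r = Real.sqrt (1 + (2*c*r - c)^2) / a := by
    intro r
    have h1 : 1 - 4 * K * r * (1 - r) / (K + 1) = (1 + (2*c*r - c)^2) / (K + 1) := by
      field_simp
      nlinarith [hc2]
    rw [groverGap, h1, Real.sqrt_div (by positivity)]
  have hgap_pos : ∀ r : ℝ, 0 < groverGap K r := by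
    intro r; rw [hgap]; positivity
  set F : ℝ → ℝ := fun r => a / (2*c) * Real.arsinh (2*c*r - c) with hF
  have hderiv : ∀ r ∈ Set.uIcc (0:ℝ) 1, HasDerivAt F ((groverGap K r)⁻¹) r := by
    intro r _
    have h1 : HasDerivAt (fun r : ℝ => 2*c*r - c) (2*c) r := by
      simpa using ((hasDerivAt_id r).const_mul (2*c)).sub_const c
    have h2 := (Real.hasDerivAt_arsinh (2*c*r - c)).comp r h1
    have h3 := h2.const_mul (a / (2*c))
    have hs : Real.sqrt (1 + (2*c*r - c)^2) ≠ 0 := by positivity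
    refine h3.congr_deriv ?_
    rw [hgap r]
    field_simp
  have hcont : Continuous (fun r => (groverGap K r)⁻¹) := by
    have hg : Continuous (groverGap K) := by
      unfold groverGap
      exact Real.continuous_sqrt.comp (by continuity)
    exact hg.inv₀ fun r => (hgap_pos r).ne'
  have hint := intervalIntegral.integral_eq_sub_of_hasDerivAt hderiv
    (hcont.intervalIntegrable 0 1)
  -- arsinh value
  have harsinh : Real.arsinh c = Real.log (c + a) := by
    rw [Real.arsinh]
    congr 2
    rw [ha]
    congr 1
    linarith [hc2]
  have hFval : F 1 - F 0 = a / c * Real.log (c + a) := by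
    simp only [hF]
    rw [show 2*c*(1:ℝ) - c = c by ring, show 2*c*(0:ℝ) - c = -c by ring,
      Real.arsinh_neg, harsinh]
    field_simp
    ring
  -- the log identity
  have hsub : a - c = (a + c)⁻¹ := by
    have h : (a - c) * (a + c) = 1 := by nlinarith
    field_simp at h ⊢
    linarith
  have hlog : Real.log ((a + c) / (a - c)) = 2 * Real.log (a + c) := by
    have h2 : (a + c) / (a - c) = (a + c)^2 := by
      rw [hsub]; field_simp
    rw [h2, Real.log_pow]
    push_cast; ring
  have hsq : Real.sqrt ((K+1)/K) = a / c := by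
    rw [Real.sqrt_div hK1.le]
  have hsq' : Real.sqrt (K/(K+1)) = c / a := by
    rw [Real.sqrt_div hK0.le]
  have hlogpos : 0 < Real.log (a + c) := Real.log_pos (by linarith)
  have h1 : (∫ r in (0:ℝ)..1, (groverGap K r)⁻¹)
      = (1 / 2) * Real.sqrt ((K + 1) / K) *
        Real.log ((a + c) / (a - c)) := by
    rw [hint, hFval, hsq, hlog, add_comm c a]
    ring
  refine ⟨h1, ?_⟩
  unfold groverSchedule1
  rw [intervalIntegral.integral_const_mul, h1, hsq', hsq, hlog]
  field_simp
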